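/- Let N ≥ 1, let k₁, …, k_N ∈ ℂ be pairwise distinct and l₁, …, l_N ∈ ℂ be pairwise distinct with k_i ≠ l_j for all i, j, let G be the Cauchy matrix with entries G_{ij} = 1/(k_i − l_j), and let X, Y be the diagonal matrices with X_i = (∏_{s=1}^N (k_s − l_i)) / (∏_{s ≠ i} (l_s − l_i)) and Y_i = (∏_{s=1}^N (k_i − l_s)) / (∏_{s ≠ i} (k_i − k_s)). Let P, Q be invertible diagonal N×N complex matrices such that Q⁻¹ + Gᵀ·P·G is invertible. Then e_Nᵀ·(Q⁻¹ + Gᵀ·P·G)⁻¹·e_N = e_Nᵀ·(G·X·Q⁻¹ + Y⁻¹·P·G)⁻¹·e_N. -/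

import Mathlib

open Matrix Finset Polynomial


lemma cauchy_master {N : ℕ} (l : Fin N → ℂ) (hl : Function.Injective l)
    (p : ℂ[X]) (hdeg : p.degree < N) (z : ℂ) :
    p.eval z = ∑ m, p.eval (l m) * ∏ s ∈ univ.erase m, ((z - l s) / (l m - l s)) := by
  have hvs : Set.InjOn l ↑(univ : Finset (Fin N)) := hl.injOn
  have h := Lagrange.eq_interpolate hvs (by simpa using hdeg)
  conv_lhs => rw [h]
  rw [Lagrange.interpolate_apply, Polynomial.eval_finset_sum]
  refine Finset.sum_congr rfl fun m _ => ?_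
  rw [Polynomial.eval_mul, Polynomial.eval_C, Lagrange.basis, Polynomial.eval_prod]
  congr 1
  refine Finset.prod_congr rfl fun s hs => ?_
  rw [Lagrange.basisDivisor]
  simp [div_eq_inv_mul]

lemma prod_sub_comm {ι : Type*} (s : Finset ι) (f g : ι → ℂ) :
    ∏ i ∈ s, (f i - g i) = (-1 : ℂ) ^ s.card * ∏ i ∈ s, (g i - f i) := by
  rw [← Finset.prod_const (-1 : ℂ), ← Finset.prod_mul_distrib]
  exact Finset.prod_congr rfl fun i _ => by ring

lemma prod_basis_eq {N : ℕ} (k l : Fin N → ℂ) (hkl : ∀ i j, k i ≠ l j) (i m : Fin N) :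
    ∏ s ∈ univ.erase m, ((k i - l s) / (l m - l s))
      = (∏ s, (k i - l s)) /
        ((k i - l m) * ((-1 : ℂ) ^ (N - 1) * ∏ s ∈ univ.erase m, (l s - l m))) := by
  rw [Finset.prod_div_distrib]
  have hcard : (univ.erase m).card = N - 1 := by
    rw [Finset.card_erase_of_mem (mem_univ m), Finset.card_univ, Fintype.card_fin]
  have hnum : ∏ s ∈ univ.erase m, (k i - l s) = (∏ s, (k i - l s)) / (k i - l m) := by
    rw [eq_div_iff (sub_ne_zero.mpr (hkl i m)), mul_comm]
    exact Finset.mul_prod_erase _ (fun s => k i - l s) (mem_univ m)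
  have hden : ∏ s ∈ univ.erase m, (l m - l s)
      = (-1 : ℂ) ^ (N - 1) * ∏ s ∈ univ.erase m, (l s - l m) := by
    rw [prod_sub_comm, hcard]
  rw [hnum, hden, div_div]

lemma monic_deg_prod {N : ℕ} (t : Finset (Fin N)) (v : Fin N → ℂ) :
    (∏ s ∈ t, (X - C (v s))).Monic ∧ (∏ s ∈ t, (X - C (v s))).degree = (t.card : WithBot ℕ) := by
  have hm : (∏ s ∈ t, (X - C (v s))).Monic :=
    monic_prod_of_monic _ _ fun s _ => monic_X_sub_C _
  refine ⟨hm, ?_⟩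
  rw [degree_eq_natDegree hm.ne_zero, natDegree_prod_of_monic _ _ fun s _ => monic_X_sub_C _]
  simp

lemma cauchy_S1 {N : ℕ} (hN : 1 ≤ N) (k l : Fin N → ℂ) (hl : Function.Injective l)
    (hkl : ∀ i j, k i ≠ l j) (i : Fin N) :
    ∑ m, 1 / (k i - l m) * ((∏ s, (k s - l m)) / ∏ s ∈ univ.erase m, (l s - l m)) = 1 := by
  have hc0 : (∏ s, (k i - l s)) ≠ 0 :=
    Finset.prod_ne_zero_iff.mpr fun s _ => sub_ne_zero.mpr (hkl i s)
  have hb0 : ∀ m : Fin N, (∏ s ∈ univ.erase m, (l s - l m)) ≠ 0 := fun m =>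
    Finset.prod_ne_zero_iff.mpr fun s hs => sub_ne_zero.mpr (hl.ne (Finset.ne_of_mem_erase hs))
  set p : ℂ[X] := C ((-1:ℂ)^N) * (∏ s, (X - C (k s)) - ∏ s, (X - C (l s))) with hp
  obtain ⟨hmk, hdk⟩ := monic_deg_prod univ k
  obtain ⟨hml, hdl⟩ := monic_deg_prod univ l
  have hdeg : p.degree < (N : WithBot ℕ) := by
    have hsub : (∏ s, (X - C (k s)) - ∏ s, (X - C (l s))).degree < (N : WithBot ℕ) := by
      have h := Polynomial.degree_sub_lt (hdk.trans hdl.symm) hmk.ne_zero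
        (by rw [hmk.leadingCoeff, hml.leadingCoeff])
      rw [hdk] at h; simpa using h
    calc p.degree ≤ 0 + (∏ s, (X - C (k s)) - ∏ s, (X - C (l s))).degree :=
          le_trans (degree_mul_le _ _) (add_le_add degree_C_le le_rfl)
      _ < _ := by rwa [zero_add]
  have hsq : (-1:ℂ)^N * (-1:ℂ)^N = 1 := by
    rw [← pow_add]; exact Even.neg_one_pow ⟨N, rfl⟩
  have hsq1 : (-1:ℂ)^(N-1) * (-1:ℂ)^(N-1) = 1 := by
    rw [← pow_add]; exact Even.neg_one_pow ⟨N-1, rfl⟩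
  have hevl : ∀ m, p.eval (l m) = ∏ s, (k s - l m) := by
    intro m
    have h0 : (∏ s, (l m - l s)) = 0 := Finset.prod_eq_zero (mem_univ m) (sub_self _)
    simp only [hp, eval_mul, eval_C, eval_sub, eval_prod, eval_X]
    rw [h0, sub_zero, prod_sub_comm univ (fun _ => l m) k]
    rw [← mul_assoc]
    simp [hsq]
  have hevk : p.eval (k i) = -((-1:ℂ)^N) * ∏ s, (k i - l s) := by
    have h0 : (∏ s, (k i - k s)) = 0 := Finset.prod_eq_zero (mem_univ i) (sub_self _)
    simp only [hp, eval_mul, eval_C, eval_sub, eval_prod, eval_X]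
    rw [h0, zero_sub]; ring
  have key := cauchy_master l hl p hdeg (k i)
  rw [hevk] at key
  have key2 : -((-1:ℂ)^N) * ∏ s, (k i - l s) = ((-1:ℂ)^(N-1) * ∏ s, (k i - l s)) *
      ∑ m, 1 / (k i - l m) * ((∏ s, (k s - l m)) / ∏ s ∈ univ.erase m, (l s - l m)) := by
    rw [key, Finset.mul_sum]
    refine Finset.sum_congr rfl fun m _ => ?_
    rw [hevl m, prod_basis_eq k l hkl i m]
    have h1 : k i - l m ≠ 0 := sub_ne_zero.mpr (hkl i m)
    have h2 := hb0 m
    have h3 : ((-1:ℂ)^(N-1)) ≠ 0 := pow_ne_zero _ (by norm_num)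
    field_simp
    try simp_rw [neg_add_eq_sub]
    linear_combination (-(∏ x, (k x - l m))) * hsq1
  have hsign : -((-1:ℂ)^N) = (-1:ℂ)^(N-1) := by
    conv_lhs => rw [show N = (N-1)+1 from (Nat.succ_pred_eq_of_pos hN).symm]
    rw [pow_succ]; ring
  rw [hsign] at key2
  have hA : ((-1:ℂ)^(N-1) * ∏ s, (k i - l s)) ≠ 0 :=
    mul_ne_zero (pow_ne_zero _ (by norm_num)) hc0
  exact (mul_right_eq_self₀.mp key2.symm).resolve_right hA

lemma cauchy_S2 {N : ℕ} (hN : 1 ≤ N) (k l : Fin N → ℂ) (hk : Function.Injective k)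
    (hl : Function.Injective l) (hkl : ∀ i j, k i ≠ l j) (i : Fin N) :
    ∑ m, 1 / (k i - l m) * ((∏ s, (k s - l m)) / ∏ s ∈ univ.erase m, (l s - l m)) *
        (1 / (k i - l m))
      = (∏ s ∈ univ.erase i, (k i - k s)) / ∏ s, (k i - l s) := by
  have hc0 : (∏ s, (k i - l s)) ≠ 0 :=
    Finset.prod_ne_zero_iff.mpr fun s _ => sub_ne_zero.mpr (hkl i s)
  have hb0 : ∀ m : Fin N, (∏ s ∈ univ.erase m, (l s - l m)) ≠ 0 := fun m =>
    Finset.prod_ne_zero_iff.mpr fun s hs => sub_ne_zero.mpr (hl.ne (Finset.ne_of_mem_erase hs))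
  set p : ℂ[X] := C ((-1:ℂ)^(N-1)) * ∏ s ∈ univ.erase i, (X - C (k s)) with hp
  obtain ⟨hmk, hdk⟩ := monic_deg_prod (univ.erase i) k
  have hcard : (univ.erase i).card = N - 1 := by
    rw [Finset.card_erase_of_mem (mem_univ i), Finset.card_univ, Fintype.card_fin]
  have hdeg : p.degree < (N : WithBot ℕ) := by
    have hsub : (∏ s ∈ univ.erase i, (X - C (k s))).degree < (N : WithBot ℕ) := by
      rw [hdk, hcard]
      exact_mod_cast Nat.cast_lt.mpr (Nat.sub_lt hN one_pos)
    calc p.degree ≤ 0 + (∏ s ∈ univ.erase i, (X - C (k s))).degree :=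
          le_trans (degree_mul_le _ _) (add_le_add degree_C_le le_rfl)
      _ < _ := by rwa [zero_add]
  have hsq : (-1:ℂ)^(N-1) * (-1:ℂ)^(N-1) = 1 := by
    rw [← pow_add]; exact Even.neg_one_pow ⟨N-1, rfl⟩
  have hevl : ∀ m, p.eval (l m) = ∏ s ∈ univ.erase i, (k s - l m) := by
    intro m
    simp only [hp, eval_mul, eval_C, eval_prod, eval_sub, eval_X]
    rw [prod_sub_comm (univ.erase i) (fun _ => l m) k, hcard, ← mul_assoc]
    simp [hsq]
  have hevk : p.eval (k i) = (-1:ℂ)^(N-1) * ∏ s ∈ univ.erase i, (k i - k s) := by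
    simp only [hp, eval_mul, eval_C, eval_prod, eval_sub, eval_X]
  have key := cauchy_master l hl p hdeg (k i)
  rw [hevk] at key
  have key2 : (-1:ℂ)^(N-1) * ∏ s ∈ univ.erase i, (k i - k s)
      = ((-1:ℂ)^(N-1) * ∏ s, (k i - l s)) *
      ∑ m, 1 / (k i - l m) * ((∏ s, (k s - l m)) / ∏ s ∈ univ.erase m, (l s - l m)) *
        (1 / (k i - l m)) := by
    rw [key, Finset.mul_sum]
    refine Finset.sum_congr rfl fun m _ => ?_
    rw [hevl m, prod_basis_eq k l hkl i m,
      show (∏ s, (k s - l m)) = (k i - l m) * ∏ s ∈ univ.erase i, (k s - l m) from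
        (Finset.mul_prod_erase _ (fun s => k s - l m) (mem_univ i)).symm]
    have h1 : k i - l m ≠ 0 := sub_ne_zero.mpr (hkl i m)
    have h2 := hb0 m
    have h3 : ((-1:ℂ)^(N-1)) ≠ 0 := pow_ne_zero _ (by norm_num)
    field_simp
    try simp_rw [neg_add_eq_sub]
    linear_combination (-(∏ x ∈ univ.erase i, (k x - l m))) * hsq
  have hA : ((-1:ℂ)^(N-1) * ∏ s, (k i - l s)) ≠ 0 :=
    mul_ne_zero (pow_ne_zero _ (by norm_num)) hc0
  have h4 : ((-1:ℂ)^(N-1) * ∏ s, (k i - l s)) *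
      ((∏ s ∈ univ.erase i, (k i - k s)) / ∏ s, (k i - l s))
      = (-1:ℂ)^(N-1) * ∏ s ∈ univ.erase i, (k i - k s) := by
    field_simp
  exact mul_left_cancel₀ hA (key2.symm.trans h4.symm)


open Matrix Finset

/-- scalar identity connecting the AKNS-type and KP-type expressions:
`e_Nᵀ·(Q⁻¹ + Gᵀ·P·G)⁻¹·e_N = e_Nᵀ·(G·X·Q⁻¹ + Y⁻¹·P·G)⁻¹·e_N`. -/
theorem cauchy_scalar_equivalence (N : ℕ) (hN : 1 ≤ N)
    (k l : Fin N → ℂ)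
    (hk : Function.Injective k) (hl : Function.Injective l)
    (hkl : ∀ i j, k i ≠ l j)
    (G X Y : Matrix (Fin N) (Fin N) ℂ)
    (hG : G = Matrix.of fun i j => 1 / (k i - l j))
    (hX : X = Matrix.diagonal fun i =>
      (∏ s, (k s - l i)) / ∏ s ∈ Finset.univ.erase i, (l s - l i))
    (hY : Y = Matrix.diagonal fun i =>
      (∏ s, (k i - l s)) / ∏ s ∈ Finset.univ.erase i, (k i - k s))
    (pd qd : Fin N → ℂ) (hp : ∀ i, pd i ≠ 0) (hq : ∀ i, qd i ≠ 0)
    (P Q : Matrix (Fin N) (Fin N) ℂ)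
    (hP : P = Matrix.diagonal pd) (hQ : Q = Matrix.diagonal qd)
    (hInv : IsUnit (Q⁻¹ + Gᵀ * P * G))
    (eN : Fin N → ℂ) (heN : eN = fun _ => 1) :
    eN ⬝ᵥ ((Q⁻¹ + Gᵀ * P * G)⁻¹ *ᵥ eN) =
      eN ⬝ᵥ ((G * X * Q⁻¹ + Y⁻¹ * P * G)⁻¹ *ᵥ eN) := by
  have hGXe : (G * X) *ᵥ eN = eN := by
    subst hG hX heN
    funext i
    simp only [Matrix.mulVec, dotProduct, Matrix.mul_diagonal, Matrix.of_apply, mul_one]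
    exact cauchy_S1 hN k l hl hkl i
  have hYGXG : (G * X * Gᵀ) * Y = 1 := by
    subst hG hX hY
    have entry : ∀ i j : Fin N,
        ((Matrix.of fun i j => 1 / (k i - l j)) *
          (Matrix.diagonal fun m =>
            (∏ s, (k s - l m)) / ∏ s ∈ Finset.univ.erase m, (l s - l m)) *
          (Matrix.of fun i j => 1 / (k i - l j))ᵀ) i j
        = ∑ m, 1 / (k i - l m) *
            ((∏ s, (k s - l m)) / ∏ s ∈ Finset.univ.erase m, (l s - l m)) *
            (1 / (k j - l m)) := by
      intro i j
      rw [Matrix.mul_apply]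
      refine Finset.sum_congr rfl fun m _ => ?_
      rw [Matrix.mul_diagonal, Matrix.transpose_apply, Matrix.of_apply, Matrix.of_apply]
    ext i j
    rw [Matrix.mul_diagonal, entry i j, Matrix.one_apply]
    by_cases hij : i = j
    · subst hij
      rw [if_pos rfl, cauchy_S2 hN k l hk hl hkl i]
      have hc0 : (∏ s, (k i - l s)) ≠ 0 :=
        Finset.prod_ne_zero_iff.mpr fun s _ => sub_ne_zero.mpr (hkl i s)
      have hd0 : (∏ s ∈ Finset.univ.erase i, (k i - k s)) ≠ 0 :=
        Finset.prod_ne_zero_iff.mpr fun s hs =>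
          sub_ne_zero.mpr (hk.ne (Finset.ne_of_mem_erase hs).symm)
      field_simp
    · rw [if_neg hij]
      have hji : k j - k i ≠ 0 := sub_ne_zero.mpr fun h => hij (hk h.symm)
      have hterm : ∀ m : Fin N, 1 / (k i - l m) *
          ((∏ s, (k s - l m)) / ∏ s ∈ Finset.univ.erase m, (l s - l m)) * (1 / (k j - l m))
          = (k j - k i)⁻¹ *
            (1 / (k i - l m) * ((∏ s, (k s - l m)) / ∏ s ∈ Finset.univ.erase m, (l s - l m))
              - 1 / (k j - l m) *
                ((∏ s, (k s - l m)) / ∏ s ∈ Finset.univ.erase m, (l s - l m))) := by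
        intro m
        have h1 : k i - l m ≠ 0 := sub_ne_zero.mpr (hkl i m)
        have h2 : k j - l m ≠ 0 := sub_ne_zero.mpr (hkl j m)
        have hb : (∏ s ∈ Finset.univ.erase m, (l s - l m)) ≠ 0 :=
          Finset.prod_ne_zero_iff.mpr fun s hs =>
            sub_ne_zero.mpr (hl.ne (Finset.ne_of_mem_erase hs))
        field_simp
        ring
      rw [show (∑ m, 1 / (k i - l m) *
          ((∏ s, (k s - l m)) / ∏ s ∈ Finset.univ.erase m, (l s - l m)) * (1 / (k j - l m)))
          = ∑ m, (k j - k i)⁻¹ *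
            (1 / (k i - l m) * ((∏ s, (k s - l m)) / ∏ s ∈ Finset.univ.erase m, (l s - l m))
              - 1 / (k j - l m) *
                ((∏ s, (k s - l m)) / ∏ s ∈ Finset.univ.erase m, (l s - l m))) from
        Finset.sum_congr rfl fun m _ => hterm m]
      rw [← Finset.mul_sum, Finset.sum_sub_distrib,
        cauchy_S1 hN k l hl hkl i, cauchy_S1 hN k l hl hkl j]
      simp
  have hYinv : Y⁻¹ = G * X * Gᵀ := Matrix.inv_eq_left_inv hYGXG
  have hdet : IsUnit (G * X).det :=
    Matrix.isUnit_det_of_right_inverse (B := Gᵀ * Y)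
      (by rw [← Matrix.mul_assoc]; exact hYGXG)
  have hM'eq : G * X * Q⁻¹ + Y⁻¹ * P * G = (G * X) * (Q⁻¹ + Gᵀ * P * G) := by
    rw [Matrix.mul_add, hYinv]
    simp [Matrix.mul_assoc]
  rw [hM'eq, Matrix.mul_inv_rev, ← Matrix.mulVec_mulVec]
  have hinv_e : (G * X)⁻¹ *ᵥ eN = eN := by
    conv_lhs => rw [← hGXe]
    rw [Matrix.mulVec_mulVec, Matrix.nonsing_inv_mul _ hdet, Matrix.one_mulVec]
  rw [hinv_e]
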